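/- Let X be an unbounded metric space equipped with a midpoint map m, and let f : X → ℝ be convex, bounded, and non-constant. Then f has an unbounded proper sublevel set: there exists a ∈ ℝ such that the set {x ∈ X : f(x) ≤ a} is unbounded and is not all of X. -/
import Mathlib


/-- `m` is a midpoint map on the metric space `X`. -/
def IsMidpointMap {X : Type*} [MetricSpace X] (m : X → X → X) : Prop :=
  ∀ x y : X, dist x (m x y) = dist x y / 2 ∧ dist y (m x y) = dist x y / 2

/-- A real valued function is convex with respect to the midpoint map `m`. -/
def MConvexFun {X : Type*} [MetricSpace X] (m : X → X → X) (f : X → ℝ) : Prop :=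
  ∀ x y : X, f (m x y) ≤ (f x + f y) / 2

theorem stmt_8 {X : Type*} [MetricSpace X]
    (hX : ¬ Bornology.IsBounded (Set.univ : Set X))
    (m : X → X → X) (hm : IsMidpointMap m)
    (f : X → ℝ) (hconv : MConvexFun m f)
    (hbdd : ∃ M : ℝ, ∀ x : X, |f x| ≤ M)
    (hnc : ∃ x y : X, f x ≠ f y) :
    ∃ a : ℝ, ¬ Bornology.IsBounded {x : X | f x ≤ a} ∧ {x : X | f x ≤ a} ≠ Set.univ := by
  by_contra h
  push_neg at h
  obtain ⟨x0, y0, hxy⟩ := hnc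
  obtain ⟨M, hM⟩ := hbdd
  have hne : Nonempty X := ⟨x0⟩
  have hbdda : BddAbove (Set.range f) := ⟨M, by rintro _ ⟨x, rfl⟩; exact (abs_le.mp (hM x)).2⟩
  set S := ⨆ x, f x with hS
  have hle : ∀ z, f z ≤ S := fun z => le_ciSup hbdda z
  have key : ∀ z, S ≤ f z := by
    intro z
    by_contra hlt
    push_neg at hlt
    set ε := (S - f z) / 2 with hε
    have hεpos : 0 < ε := by simp [hε]; linarith
    have haS : S - ε < S := by linarith
    obtain ⟨w0, hw0⟩ := exists_lt_of_lt_ciSup (haS.trans_eq hS)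
    have hne' : {x : X | f x ≤ S - ε} ≠ Set.univ := by
      intro heq
      have : w0 ∈ {x : X | f x ≤ S - ε} := heq ▸ Set.mem_univ w0
      exact absurd this (not_le.mpr hw0)
    have hb : Bornology.IsBounded {x : X | f x ≤ S - ε} := by
      by_contra hnb
      exact hne' (h _ hnb)
    obtain ⟨R, hR⟩ := hb.subset_closedBall z
    have : ¬ (Set.univ : Set X) ⊆ Metric.closedBall z (max (2 * R) 0) := by
      intro hsub
      exact hX ((Metric.isBounded_closedBall).subset hsub)
    obtain ⟨y, -, hy⟩ := Set.not_subset.mp this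
    rw [Metric.mem_closedBall, not_le] at hy
    have hmw := hm z y
    have hwfar : m z y ∉ Metric.closedBall z R := by
      rw [Metric.mem_closedBall, dist_comm, not_le, hmw.1]
      have : 2 * R < dist z y := lt_of_le_of_lt (le_max_left _ _) (by rwa [dist_comm] at hy)
      linarith
    have hwval : S - ε < f (m z y) := by
      by_contra hcon
      push_neg at hcon
      exact hwfar (hR hcon)
    have : f (m z y) ≤ (f z + f y) / 2 := hconv z y
    have : f (m z y) ≤ S - ε := by
      have := hle y
      have h2 : (f z + f y) / 2 ≤ S - ε := by
        rw [hε]; linarith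
      linarith [hconv z y]
    linarith
  have hx0 : f x0 = S := le_antisymm (hle x0) (key x0)
  have hy0 : f y0 = S := le_antisymm (hle y0) (key y0)
  exact hxy (hx0.trans hy0.symm)
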